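/- Every indecomposable generalized Cartan matrix K satisfies exactly one of the following three conditions: (i) K is of finite type, i.e. there exists u : Fin n → ℝ with u i > 0 for all i and (K ·ᵥ u) i > 0 for all i; (ii) K is of affine type, i.e. there exists u : Fin n → ℝ with u i > 0 for all i and K ·ᵥ u = 0; (iii) K is of indefinite type, i.e. there exists u : Fin n → ℝ with u i > 0 for all i and (K ·ᵥ u) i < 0 for all i. -/

import Mathlib

open Matrix Finset

namespace VinbergAux
variable {n : ℕ}
variable {n : ℕ}

/-- One application of `I + B`. -/
def step (B : Matrix (Fin n) (Fin n) ℝ) (u : Fin n → ℝ) : Fin n → ℝ :=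
  u + B.mulVec u

lemma step_apply (B : Matrix (Fin n) (Fin n) ℝ) (u : Fin n → ℝ) (i : Fin n) :
    step B u i = u i + ∑ j, B i j * u j := by
  simp [step, Matrix.mulVec, dotProduct]

lemma step_sub (B : Matrix (Fin n) (Fin n) ℝ) (u v : Fin n → ℝ) :
    step B (u - v) = step B u - step B v := by
  simp [step, Matrix.mulVec_sub]; abel

lemma step_smul (B : Matrix (Fin n) (Fin n) ℝ) (c : ℝ) (u : Fin n → ℝ) :
    step B (c • u) = c • step B u := by
  simp [step, Matrix.mulVec_smul, smul_add]

lemma mulVec_step (B : Matrix (Fin n) (Fin n) ℝ) (u : Fin n → ℝ) :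
    B.mulVec (step B u) = step B (B.mulVec u) := by
  simp [step, Matrix.mulVec_add]

lemma iterate_sub (B : Matrix (Fin n) (Fin n) ℝ) (k : ℕ) (u v : Fin n → ℝ) :
    (step B)^[k] (u - v) = (step B)^[k] u - (step B)^[k] v := by
  induction k generalizing u v with
  | zero => simp
  | succ k ih => simp [Function.iterate_succ_apply, step_sub, ih]

lemma iterate_smul (B : Matrix (Fin n) (Fin n) ℝ) (k : ℕ) (c : ℝ) (u : Fin n → ℝ) :
    (step B)^[k] (c • u) = c • (step B)^[k] u := by
  induction k generalizing u with
  | zero => simp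
  | succ k ih => simp [Function.iterate_succ_apply, step_smul, ih]

lemma mulVec_iterate (B : Matrix (Fin n) (Fin n) ℝ) (k : ℕ) (u : Fin n → ℝ) :
    B.mulVec ((step B)^[k] u) = (step B)^[k] (B.mulVec u) := by
  induction k generalizing u with
  | zero => simp
  | succ k ih => simp [Function.iterate_succ_apply, mulVec_step, ih]

lemma step_nonneg {B : Matrix (Fin n) (Fin n) ℝ} (hB : ∀ i j, 0 ≤ B i j)
    {u : Fin n → ℝ} (hu : ∀ i, 0 ≤ u i) (i : Fin n) : 0 ≤ step B u i := by
  rw [step_apply]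
  exact add_nonneg (hu i) (Finset.sum_nonneg fun j _ => mul_nonneg (hB i j) (hu j))

lemma step_pos_of_pos {B : Matrix (Fin n) (Fin n) ℝ} (hB : ∀ i j, 0 ≤ B i j)
    {u : Fin n → ℝ} (hu : ∀ i, 0 ≤ u i) {i : Fin n} (hi : 0 < u i) : 0 < step B u i := by
  rw [step_apply]
  exact add_pos_of_pos_of_nonneg hi
    (Finset.sum_nonneg fun j _ => mul_nonneg (hB i j) (hu j))

/-- support of a nonneg vector -/
noncomputable def supp (u : Fin n → ℝ) : Finset (Fin n) := Finset.univ.filter fun i => 0 < u i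

lemma supp_subset_step {B : Matrix (Fin n) (Fin n) ℝ} (hB : ∀ i j, 0 ≤ B i j)
    {u : Fin n → ℝ} (hu : ∀ i, 0 ≤ u i) : supp u ⊆ supp (step B u) := by
  intro i hi
  simp only [supp, Finset.mem_filter, Finset.mem_univ, true_and] at hi ⊢
  exact step_pos_of_pos hB hu hi

lemma supp_ssubset_step {B : Matrix (Fin n) (Fin n) ℝ} (hB : ∀ i j, 0 ≤ B i j)
    (hconn : ∀ S : Finset (Fin n), S.Nonempty → S ≠ Finset.univ →
      ∃ j ∉ S, ∃ l ∈ S, B j l ≠ 0)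
    {u : Fin n → ℝ} (hu : ∀ i, 0 ≤ u i) (hne : (supp u).Nonempty)
    (hnu : supp u ≠ Finset.univ) : supp u ⊂ supp (step B u) := by
  obtain ⟨j, hj, l, hl, hBjl⟩ := hconn _ hne hnu
  refine Finset.ssubset_iff_of_subset (supp_subset_step hB hu) |>.mpr ⟨j, ?_, hj⟩
  simp only [supp, Finset.mem_filter, Finset.mem_univ, true_and] at hl ⊢
  rw [step_apply]
  have h1 : 0 < B j l * u l := mul_pos ((hB j l).lt_of_ne (Ne.symm hBjl)) hl
  have h2 : B j l * u l ≤ ∑ m, B j m * u m :=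
    Finset.single_le_sum (f := fun m => B j m * u m)
      (fun m _ => mul_nonneg (hB j m) (hu m)) (Finset.mem_univ l)
  have := hu j
  linarith


lemma iterate_nonneg {B : Matrix (Fin n) (Fin n) ℝ} (hB : ∀ i j, 0 ≤ B i j)
    (k : ℕ) {u : Fin n → ℝ} (hu : ∀ i, 0 ≤ u i) (i : Fin n) : 0 ≤ (step B)^[k] u i := by
  induction k generalizing u with
  | zero => exact hu i
  | succ k ih =>
    rw [Function.iterate_succ_apply]
    exact ih (step_nonneg hB hu)

lemma iterate_pos_aux {B : Matrix (Fin n) (Fin n) ℝ} (hB : ∀ i j, 0 ≤ B i j)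
    (hconn : ∀ S : Finset (Fin n), S.Nonempty → S ≠ Finset.univ →
      ∃ j ∉ S, ∃ l ∈ S, B j l ≠ 0) :
    ∀ (k : ℕ) (u : Fin n → ℝ), (∀ i, 0 ≤ u i) → (supp u).Nonempty →
      n ≤ (supp u).card + k → ∀ i, 0 < (step B)^[k] u i := by
  intro k
  induction k with
  | zero =>
    intro u hu hne hcard i
    have hle : (supp u).card ≤ Fintype.card (Fin n) := Finset.card_le_univ _
    rw [Fintype.card_fin] at hle
    have : supp u = Finset.univ := Finset.eq_univ_of_card _ (by rw [Fintype.card_fin]; omega)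
    have : i ∈ supp u := this ▸ Finset.mem_univ i
    simpa [supp] using this
  | succ k ih =>
    intro u hu hne hcard i
    rw [Function.iterate_succ_apply]
    by_cases huniv : supp u = Finset.univ
    · refine ih (step B u) (fun j => step_nonneg hB hu j) ?_ ?_ i
      · exact (hne.mono (supp_subset_step hB hu))
      · have h4 : supp (step B u) = Finset.univ :=
          Finset.univ_subset_iff.mp (huniv ▸ supp_subset_step hB hu)
        have h5 : (supp (step B u)).card = n := by rw [h4]; simp
        omega
    · have hss := supp_ssubset_step hB hconn hu hne huniv
      have hcard2 : (supp u).card < (supp (step B u)).card := Finset.card_lt_card hss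
      have h3 : n ≤ (supp (step B u)).card + k := by omega
      exact ih (step B u) (fun j => step_nonneg hB hu j)
        (hne.mono hss.subset) h3 i

lemma iterate_pos {B : Matrix (Fin n) (Fin n) ℝ} (hn : 1 ≤ n) (hB : ∀ i j, 0 ≤ B i j)
    (hconn : ∀ S : Finset (Fin n), S.Nonempty → S ≠ Finset.univ →
      ∃ j ∉ S, ∃ l ∈ S, B j l ≠ 0)
    {u : Fin n → ℝ} (hu : ∀ i, 0 ≤ u i) (hune : u ≠ 0) (i : Fin n) :
    0 < (step B)^[n - 1] u i := by
  have hne : (supp u).Nonempty := by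
    obtain ⟨j, hj⟩ := Function.ne_iff.mp hune
    exact ⟨j, by simp [supp, (hu j).lt_of_ne (Ne.symm (by simpa using hj))]⟩
  exact iterate_pos_aux hB hconn (n-1) u hu hne
    (by have := Finset.card_pos.mpr hne; omega) i


lemma perron (hn : 1 ≤ n) (B : Matrix (Fin n) (Fin n) ℝ)
    (hB : ∀ i j, 0 ≤ B i j)
    (hconn : ∀ S : Finset (Fin n), S.Nonempty → S ≠ Finset.univ →
      ∃ j ∉ S, ∃ l ∈ S, B j l ≠ 0) :
    ∃ (r : ℝ) (v : Fin n → ℝ), 0 ≤ r ∧ (∀ i, 0 < v i) ∧ B.mulVec v = r • v := by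
  have i0 : Fin n := ⟨0, hn⟩
  have : Nonempty (Fin n) := ⟨i0⟩
  set M : ℝ := ∑ i, ∑ j, B i j with hMdef
  have hM0 : 0 ≤ M := Finset.sum_nonneg fun i _ => Finset.sum_nonneg fun j _ => hB i j
  have hbound : ∀ (t : ℝ) (u : Fin n → ℝ), u ∈ stdSimplex ℝ (Fin n) →
      (∀ i, t * u i ≤ B.mulVec u i) → t ≤ M := by
    intro t u hu hc
    have hu1 : ∀ j, u j ≤ 1 := fun j => by
      calc u j ≤ ∑ i, u i := Finset.single_le_sum (fun i _ => hu.1 i) (Finset.mem_univ j)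
        _ = 1 := hu.2
    calc t = t * ∑ i, u i := by rw [hu.2, mul_one]
      _ = ∑ i, t * u i := by rw [Finset.mul_sum]
      _ ≤ ∑ i, B.mulVec u i := Finset.sum_le_sum fun i _ => hc i
      _ = ∑ i, ∑ j, B i j * u j := by simp [Matrix.mulVec, dotProduct]
      _ ≤ M := Finset.sum_le_sum fun i _ => Finset.sum_le_sum fun j _ =>
            mul_le_of_le_one_right (hB i j) (hu1 j)
  set T : Set (ℝ × (Fin n → ℝ)) := {p | p.1 ∈ Set.Icc 0 M ∧ p.2 ∈ stdSimplex ℝ (Fin n)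
    ∧ ∀ i, p.1 * p.2 i ≤ B.mulVec p.2 i} with hTdef
  have hmulVec_cont : ∀ i : Fin n, Continuous fun u : Fin n → ℝ => B.mulVec u i := by
    intro i
    simp only [Matrix.mulVec, dotProduct]
    exact continuous_finset_sum _ fun j _ => continuous_const.mul (continuous_apply j)
  have hclosed : IsClosed T := by
    have h1 : IsClosed {p : ℝ × (Fin n → ℝ) | p.1 ∈ Set.Icc 0 M} :=
      isClosed_Icc.preimage continuous_fst
    have h2 : IsClosed {p : ℝ × (Fin n → ℝ) | p.2 ∈ stdSimplex ℝ (Fin n)} :=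
      (isClosed_stdSimplex ℝ (Fin n)).preimage continuous_snd
    have h3 : ∀ i : Fin n, IsClosed {p : ℝ × (Fin n → ℝ) | p.1 * p.2 i ≤ B.mulVec p.2 i} :=
      fun i => isClosed_le (continuous_fst.mul ((continuous_apply i).comp continuous_snd))
        ((hmulVec_cont i).comp continuous_snd)
    have hTeq : T = {p : ℝ × (Fin n → ℝ) | p.1 ∈ Set.Icc 0 M} ∩
        ({p | p.2 ∈ stdSimplex ℝ (Fin n)} ∩
          ⋂ i : Fin n, {p | p.1 * p.2 i ≤ B.mulVec p.2 i}) := by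
      ext p
      simp only [hTdef, Set.mem_setOf_eq, Set.mem_inter_iff, Set.mem_iInter]
    rw [hTeq]
    exact h1.inter (h2.inter (isClosed_iInter h3))
  have hcomp : IsCompact T := by
    refine IsCompact.of_isClosed_subset ((isCompact_Icc (a := (0:ℝ)) (b := M)).prod
      (isCompact_stdSimplex ℝ (Fin n))) hclosed ?_
    rintro ⟨t, u⟩ ⟨h1, h2, _⟩
    exact ⟨h1, h2⟩
  have hTne : T.Nonempty := by
    refine ⟨(0, fun _ => (n : ℝ)⁻¹), ?_, ?_, ?_⟩
    · exact ⟨le_refl 0, hM0⟩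
    · constructor
      · intro i; positivity
      · simp
        field_simp
    · intro i
      simp only [zero_mul, Matrix.mulVec, dotProduct]
      exact Finset.sum_nonneg fun j _ => mul_nonneg (hB i j) (by positivity)
  obtain ⟨p, hpT, hpmax⟩ := hcomp.exists_isMaxOn hTne continuous_fst.continuousOn
  obtain ⟨⟨hr0, hrM⟩, hpS, hpc⟩ := hpT
  set r := p.1 with hrdef
  set u := p.2 with hudef
  have hu0 : ∀ i, 0 ≤ u i := hpS.1
  have hune : u ≠ 0 := by
    intro h
    have h2 := hpS.2
    rw [h] at h2
    simp at h2
  have key : B.mulVec u = r • u := by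
    by_contra hne
    have hw0 : ∀ i, 0 ≤ (B.mulVec u - r • u) i := by
      intro i
      have := hpc i
      simp only [Pi.sub_apply, Pi.smul_apply, smul_eq_mul]
      linarith
    have hwne : B.mulVec u - r • u ≠ 0 := sub_ne_zero.mpr hne
    have hzpos : ∀ i, 0 < (step B)^[n-1] u i := iterate_pos hn hB hconn hu0 hune
    have hLwpos : ∀ i, 0 < (step B)^[n-1] (B.mulVec u - r • u) i :=
      iterate_pos hn hB hconn hw0 hwne
    set z := (step B)^[n-1] u with hzdef
    set Lw := (step B)^[n-1] (B.mulVec u - r • u) with hLwdef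
    have hrel : B.mulVec z - r • z = Lw := by
      rw [hLwdef, iterate_sub, iterate_smul, ← mulVec_iterate]
    set Mz := Finset.univ.sup' Finset.univ_nonempty z with hMzdef
    have hMzpos : 0 < Mz := lt_of_lt_of_le (hzpos i0) (Finset.le_sup' z (Finset.mem_univ i0))
    set mw := Finset.univ.inf' Finset.univ_nonempty Lw with hmwdef
    have hmwpos : 0 < mw := by
      rw [hmwdef, Finset.lt_inf'_iff]
      exact fun i _ => hLwpos i
    set δ := mw / Mz with hddef
    have hδpos : 0 < δ := div_pos hmwpos hMzpos
    have hzi : ∀ i, (r + δ) * z i ≤ B.mulVec z i := by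
      intro i
      have h1 : B.mulVec z i - r * z i = Lw i := by
        have := congrFun hrel i
        simpa using this
      have h2 : δ * z i ≤ Lw i := by
        calc δ * z i ≤ δ * Mz :=
              mul_le_mul_of_nonneg_left (Finset.le_sup' z (Finset.mem_univ i)) hδpos.le
          _ = mw := by rw [hddef]; field_simp
          _ ≤ Lw i := Finset.inf'_le Lw (Finset.mem_univ i)
      have h3 : (r + δ) * z i = r * z i + δ * z i := by ring
      linarith
    have hσpos : 0 < ∑ i, z i := Finset.sum_pos (fun i _ => hzpos i) Finset.univ_nonempty
    set σ := ∑ i, z i with hσdef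
    set z' := σ⁻¹ • z with hz'def
    have hz'S : z' ∈ stdSimplex ℝ (Fin n) := by
      constructor
      · intro i
        simp only [hz'def, Pi.smul_apply, smul_eq_mul]
        exact mul_nonneg (inv_nonneg.mpr hσpos.le) (hzpos i).le
      · simp only [hz'def, Pi.smul_apply, smul_eq_mul]
        rw [← Finset.mul_sum, ← hσdef, inv_mul_cancel₀ hσpos.ne']
    have hz'c : ∀ i, (r + δ) * z' i ≤ B.mulVec z' i := by
      intro i
      have hmv : B.mulVec z' i = σ⁻¹ * B.mulVec z i := by
        rw [hz'def, Matrix.mulVec_smul]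
        simp
      rw [hmv]
      have := mul_le_mul_of_nonneg_left (hzi i) (inv_nonneg.mpr hσpos.le)
      calc (r + δ) * z' i = σ⁻¹ * ((r + δ) * z i) := by
            simp only [hz'def, Pi.smul_apply, smul_eq_mul]; ring
        _ ≤ σ⁻¹ * B.mulVec z i := this
    have hmem : ((r + δ, z') : ℝ × (Fin n → ℝ)) ∈ T := by
      refine ⟨⟨?_, ?_⟩, hz'S, hz'c⟩
      · show (0:ℝ) ≤ r + δ
        linarith
      · show r + δ ≤ M
        exact hbound _ _ hz'S hz'c
    have := hpmax hmem
    simp only [← hrdef] at this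
    have : r + δ ≤ r := this
    linarith
  have hstep : step B u = (1 + r) • u := by
    funext i
    simp only [step, Pi.add_apply, key, Pi.smul_apply, smul_eq_mul]
    ring
  have hiter : ∀ k : ℕ, (step B)^[k] u = ((1 + r)^k) • u := by
    intro k
    induction k with
    | zero => simp
    | succ k ih =>
      rw [Function.iterate_succ_apply, hstep, iterate_smul, ih, smul_smul, pow_succ]
      ring_nf
  have hupos : ∀ i, 0 < u i := by
    intro i
    have h1 := iterate_pos hn hB hconn hu0 hune i
    rw [hiter] at h1
    simp only [Pi.smul_apply, smul_eq_mul] at h1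
    have h2 : (0:ℝ) < (1 + r)^(n-1) := pow_pos (by linarith) _
    rcases mul_pos_iff.mp h1 with ⟨_, h⟩ | ⟨h, _⟩
    · exact h
    · linarith
  exact ⟨r, u, hr0, hupos, key⟩


end VinbergAux



/-- `K` is an `n × n` generalized Cartan matrix. -/
def IsGCM {n : ℕ} (K : Matrix (Fin n) (Fin n) ℤ) : Prop :=
  (∀ i, K i i = 2) ∧ (∀ i j, i ≠ j → K i j ≤ 0) ∧ (∀ i j, i ≠ j → K i j = 0 → K j i = 0)

/-- `K` is indecomposable: there is no partition of `Fin n` into two nonempty disjoint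
subsets `S`, `T` with `K i j = 0` for all `i ∈ S`, `j ∈ T`. -/
def Indecomposable {n : ℕ} (K : Matrix (Fin n) (Fin n) ℤ) : Prop :=
  ¬ ∃ S T : Finset (Fin n), S.Nonempty ∧ T.Nonempty ∧ Disjoint S T ∧ S ∪ T = Finset.univ ∧
      ∀ i ∈ S, ∀ j ∈ T, K i j = 0

/-- `K` with entries viewed in `ℝ`. -/
def KR {n : ℕ} (K : Matrix (Fin n) (Fin n) ℤ) : Matrix (Fin n) (Fin n) ℝ :=
  K.map (Int.cast : ℤ → ℝ)

/-- Finite type: a positive vector with entrywise positive image. -/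
def FiniteType {n : ℕ} (K : Matrix (Fin n) (Fin n) ℤ) : Prop :=
  ∃ u : Fin n → ℝ, (∀ i, 0 < u i) ∧ ∀ i, 0 < (KR K).mulVec u i

/-- Affine type: a positive null vector. -/
def AffineType {n : ℕ} (K : Matrix (Fin n) (Fin n) ℤ) : Prop :=
  ∃ u : Fin n → ℝ, (∀ i, 0 < u i) ∧ (KR K).mulVec u = 0

/-- Indefinite type: a positive vector with entrywise negative image. -/
def IndefiniteType {n : ℕ} (K : Matrix (Fin n) (Fin n) ℤ) : Prop :=
  ∃ u : Fin n → ℝ, (∀ i, 0 < u i) ∧ ∀ i, (KR K).mulVec u i < 0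

/-- Vinberg's theorem: every indecomposable generalized Cartan matrix is of exactly one
of the three types: finite, affine, or indefinite. -/
theorem vinberg_trichotomy {n : ℕ} (hn : 1 ≤ n) (K : Matrix (Fin n) (Fin n) ℤ)
    (hGCM : IsGCM K) (hInd : Indecomposable K) :
    (FiniteType K ∧ ¬ AffineType K ∧ ¬ IndefiniteType K) ∨
    (¬ FiniteType K ∧ AffineType K ∧ ¬ IndefiniteType K) ∨
    (¬ FiniteType K ∧ ¬ AffineType K ∧ IndefiniteType K) := by
  classical
  have : Nonempty (Fin n) := ⟨⟨0, hn⟩⟩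
  obtain ⟨hdiag, hoff, _⟩ := hGCM
  set B : Matrix (Fin n) (Fin n) ℝ := fun i j => if i = j then 0 else (-(K i j : ℝ)) with hBdef
  have hB : ∀ i j, 0 ≤ B i j := by
    intro i j
    by_cases h : i = j
    · simp [hBdef, h]
    · simp only [hBdef, if_neg h]
      have := hoff i j h
      have : (K i j : ℝ) ≤ 0 := by exact_mod_cast this
      linarith
  have hBoff : ∀ i j : Fin n, i ≠ j → B i j = -(K i j : ℝ) := by
    intro i j h; simp [hBdef, h]
  have hKR : ∀ (u : Fin n → ℝ) (i : Fin n),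
      (KR K).mulVec u i = 2 * u i - B.mulVec u i := by
    intro u i
    have hentry : ∀ j, KR K i j = (if i = j then (2:ℝ) else 0) - B i j := by
      intro j
      by_cases h : i = j
      · subst h
        simp [KR, hBdef, hdiag i]
      · simp [KR, hBdef, h]
    simp only [Matrix.mulVec, dotProduct]
    calc ∑ j, KR K i j * u j
        = ∑ j, ((if i = j then (2:ℝ) * u j else 0) - B i j * u j) := by
          refine Finset.sum_congr rfl fun j _ => ?_
          rw [hentry j]
          split_ifs with h <;> ring
      _ = (∑ j, if i = j then (2:ℝ) * u j else 0) - ∑ j, B i j * u j :=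
          Finset.sum_sub_distrib _ _
      _ = 2 * u i - ∑ j, B i j * u j := by
          rw [Finset.sum_ite_eq]
          simp
  have hconnB : ∀ S : Finset (Fin n), S.Nonempty → S ≠ Finset.univ →
      ∃ j ∉ S, ∃ l ∈ S, B j l ≠ 0 := by
    intro S hSne hSuniv
    by_contra hcon
    push_neg at hcon
    apply hInd
    refine ⟨Sᶜ, S, ?_, hSne, disjoint_compl_left, by rw [Finset.union_comm, Finset.union_compl], ?_⟩
    · rw [Finset.nonempty_iff_ne_empty]
      intro h
      apply hSuniv
      rwa [Finset.compl_eq_empty_iff] at h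
    · intro i hi j hj
      have hiS : i ∉ S := Finset.mem_compl.mp hi
      have hij : i ≠ j := fun h => hiS (h ▸ hj)
      have h0 := hcon i hiS j hj
      rw [hBoff i j hij] at h0
      have : (K i j : ℝ) = 0 := by linarith
      exact_mod_cast this
  have hconnBT : ∀ S : Finset (Fin n), S.Nonempty → S ≠ Finset.univ →
      ∃ j ∉ S, ∃ l ∈ S, Bᵀ j l ≠ 0 := by
    intro S hSne hSuniv
    by_contra hcon
    push_neg at hcon
    apply hInd
    refine ⟨S, Sᶜ, hSne, ?_, disjoint_compl_right, by simp, ?_⟩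
    · rw [Finset.nonempty_iff_ne_empty]
      intro h
      apply hSuniv
      rwa [Finset.compl_eq_empty_iff] at h
    · intro i hi j hj
      have hjS : j ∉ S := Finset.mem_compl.mp hj
      have hij : i ≠ j := fun h => hjS (h ▸ hi)
      have h0 := hcon j hjS i hi
      rw [Matrix.transpose_apply, hBoff i j hij] at h0
      have : (K i j : ℝ) = 0 := by linarith
      exact_mod_cast this
  obtain ⟨r, v, hr0, hv, hBv⟩ := VinbergAux.perron hn B hB hconnB
  obtain ⟨s, y, hs0, hy, hBy⟩ := VinbergAux.perron hn Bᵀ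
    (fun i j => by rw [Matrix.transpose_apply]; exact hB j i) hconnBT
  have hAv : ∀ i, (KR K).mulVec v i = (2 - r) * v i := by
    intro i
    rw [hKR]
    have := congrFun hBv i
    simp only [Pi.smul_apply, smul_eq_mul] at this
    rw [this]
    ring
  have hdot : ∀ u : Fin n → ℝ, y ⬝ᵥ (KR K).mulVec u = (2 - s) * (y ⬝ᵥ u) := by
    intro u
    have h1 : y ⬝ᵥ B.mulVec u = s * (y ⬝ᵥ u) := by
      rw [Matrix.dotProduct_mulVec, ← Matrix.mulVec_transpose, hBy,
        smul_dotProduct]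
      simp
    have h2 : y ⬝ᵥ (KR K).mulVec u = 2 * (y ⬝ᵥ u) - y ⬝ᵥ B.mulVec u := by
      simp only [dotProduct, Finset.mul_sum, ← Finset.sum_sub_distrib]
      refine Finset.sum_congr rfl fun i _ => ?_
      rw [hKR]
      ring
    rw [h2, h1]
    ring
  have hyu_pos : ∀ u : Fin n → ℝ, (∀ i, 0 < u i) → 0 < y ⬝ᵥ u := fun u hu =>
    Finset.sum_pos (fun i _ => mul_pos (hy i) (hu i)) Finset.univ_nonempty
  have hFs : FiniteType K → s < 2 := by
    rintro ⟨u, hu, hAu⟩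
    have h1 : 0 < y ⬝ᵥ (KR K).mulVec u :=
      Finset.sum_pos (fun i _ => mul_pos (hy i) (hAu i)) Finset.univ_nonempty
    rw [hdot u] at h1
    nlinarith [hyu_pos u hu]
  have hAs : AffineType K → s = 2 := by
    rintro ⟨u, hu, hAu⟩
    have h1 : y ⬝ᵥ (KR K).mulVec u = 0 := by rw [hAu]; simp
    rw [hdot u] at h1
    rcases mul_eq_zero.mp h1 with h | h
    · linarith
    · exact absurd h (hyu_pos u hu).ne'
  have hIs : IndefiniteType K → 2 < s := by
    rintro ⟨u, hu, hAu⟩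
    have h1 : y ⬝ᵥ (KR K).mulVec u < 0 :=
      Finset.sum_neg (fun i _ => mul_neg_of_pos_of_neg (hy i) (hAu i)) Finset.univ_nonempty
    rw [hdot u] at h1
    nlinarith [hyu_pos u hu]
  rcases lt_trichotomy r 2 with h | h | h
  · left
    have hF : FiniteType K :=
      ⟨v, hv, fun i => by rw [hAv i]; exact mul_pos (by linarith) (hv i)⟩
    have hs2 := hFs hF
    exact ⟨hF, fun hA => absurd (hAs hA) (by linarith),
      fun hI => absurd (hIs hI) (by linarith)⟩
  · right; left
    have hA : AffineType K := ⟨v, hv, funext fun i => by rw [hAv i, h]; simp⟩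
    have hs2 := hAs hA
    exact ⟨fun hF => absurd (hFs hF) (by linarith), hA,
      fun hI => absurd (hIs hI) (by linarith)⟩
  · right; right
    have hI : IndefiniteType K :=
      ⟨v, hv, fun i => by rw [hAv i]; exact mul_neg_of_neg_of_pos (by linarith) (hv i)⟩
    have hs2 := hIs hI
    exact ⟨fun hF => absurd (hFs hF) (by linarith),
      fun hA => absurd (hAs hA) (by linarith), hI⟩
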